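/- Let ρ be a probability distribution on a finite set Ω with |Ω| = k ≥ 2, Shannon entropy h := H(ρ) with 0 < h ≤ 1/4, and q := max_{x∈Ω} ρ(x) ≥ 1/2. Then (1 − q)·log(1/(1 − q)) ≥ h / (9 + log(9k·log(9k))). -/
import Mathlib


open Finset

set_option maxHeartbeats 1000000

noncomputable section

/-- Shannon entropy (in nats) of a finitely supported distribution, with
the convention `0 · log 0 = 0` (note `Real.log 0 = 0`). -/
def shannonEntropy {Ω : Type*} [Fintype Ω] (ρ : Ω → ℝ) : ℝ :=
  ∑ x, -(ρ x * Real.log (ρ x))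

private lemma aux_neg_mul_log (p c : ℝ) (hp : 0 ≤ p) (hc : 0 < c) :
    -(p * Real.log p) ≤ c - p - p * Real.log c := by
  rcases hp.eq_or_lt with h0 | h0
  · simp [← h0, hc.le]
  · have h1 : Real.log c - Real.log p ≤ c / p - 1 := by
      have := Real.log_le_sub_one_of_pos (div_pos hc h0)
      rwa [Real.log_div hc.ne' h0.ne'] at this
    have h2 := mul_le_mul_of_nonneg_left h1 h0.le
    have h3 : p * (c / p - 1) = c - p := by field_simp
    nlinarith

/-- If `|Ω| = k ≥ 2`, `0 < h = H(ρ) ≤ 1/4` and `q = max_x ρ(x) ≥ 1/2`, then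
`(1 − q)·log(1/(1 − q)) ≥ h / (9 + log(9k·log(9k)))`. -/
theorem stmt_16 {Ω : Type*} [Fintype Ω]
    (hk : 2 ≤ Fintype.card Ω)
    (ρ : Ω → ℝ) (hρ0 : ∀ x, 0 ≤ ρ x) (hρ1 : ∑ x, ρ x = 1)
    (h : ℝ) (hent : shannonEntropy ρ = h) (hh0 : 0 < h) (hh1 : h ≤ 1 / 4)
    (q : ℝ) (hqmax : ∀ x, ρ x ≤ q) (hqmem : ∃ x, ρ x = q)
    (hq : 1 / 2 ≤ q) :
    h / (9 + Real.log (9 * (Fintype.card Ω : ℝ) *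
        Real.log (9 * (Fintype.card Ω : ℝ)))) ≤
      (1 - q) * Real.log (1 / (1 - q)) := by
  classical
  obtain ⟨x₀, hx₀⟩ := hqmem
  have hk1 : (2:ℝ) ≤ (Fintype.card Ω : ℝ) := by exact_mod_cast hk
  set K : ℝ := (Fintype.card Ω : ℝ) with hK
  have hq1 : q ≤ 1 := by
    rw [← hx₀, ← hρ1]
    exact Finset.single_le_sum (fun x _ => hρ0 x) (mem_univ x₀)
  set s : ℝ := 1 - q with hs_def
  set L : ℝ := -Real.log s with hL_def
  set C : ℝ := 9 + Real.log (9 * K * Real.log (9 * K)) with hC_def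
  clear_value K s L C
  have hsplit : ∑ x ∈ univ.erase x₀, ρ x = s := by
    have h := Finset.sum_erase_add univ ρ (mem_univ x₀)
    rw [hρ1, hx₀] at h; linarith
  have hErest : shannonEntropy ρ =
      (∑ x ∈ univ.erase x₀, -(ρ x * Real.log (ρ x))) + -(q * Real.log q) := by
    rw [shannonEntropy, ← Finset.sum_erase_add univ _ (mem_univ x₀), hx₀]
  have hs_half : s ≤ 1/2 := by simp only [hs_def]; linarith
  -- s > 0
  have hs0 : 0 < s := by
    rcases lt_or_ge 0 s with h' | h'
    · exact h'
    · exfalso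
      have hs_eq : s = 0 := le_antisymm h' (by
        rw [← hsplit]; exact Finset.sum_nonneg fun x _ => hρ0 x)
      have hall : ∀ x ∈ univ.erase x₀, ρ x = 0 := by
        have := (Finset.sum_eq_zero_iff_of_nonneg
          (fun x (_ : x ∈ univ.erase x₀) => hρ0 x)).mp (by rw [hsplit, hs_eq])
        exact this
      have hq_eq : q = 1 := by
        have : (1:ℝ) - q = 0 := by rw [← hs_def, hs_eq]
        linarith
      have hzero : shannonEntropy ρ = 0 := by
        rw [hErest, hq_eq]
        simp only [Real.log_one, mul_zero, neg_zero, add_zero]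
        exact Finset.sum_eq_zero fun x hx => by rw [hall x hx]; simp
      rw [hent] at hzero; linarith
  -- q-term bound : -(q * log q) ≤ s
  have hq0 : 0 < q := by linarith
  have hqterm : -(q * Real.log q) ≤ s := by
    have h1 : Real.log (1/q) ≤ 1/q - 1 := Real.log_le_sub_one_of_pos (by positivity)
    rw [one_div, Real.log_inv] at h1
    have h2 := mul_le_mul_of_nonneg_left h1 hq0.le
    have h3 : q * (q⁻¹ - 1) = 1 - q := by field_simp
    rw [h3] at h2
    simp only [hs_def]
    nlinarith
  -- rest entropy bound
  have hKcard : ((univ.erase x₀).card : ℝ) = K - 1 := by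
    rw [Finset.card_erase_of_mem (mem_univ x₀), Finset.card_univ]
    have : 1 ≤ Fintype.card Ω := by omega
    rw [hK]
    push_cast [Nat.cast_sub this]
    ring
  have hK1 : (1:ℝ) ≤ K - 1 := by linarith
  have hc0 : 0 < s / (K - 1) := by positivity
  have hrest : ∑ x ∈ univ.erase x₀, -(ρ x * Real.log (ρ x)) ≤
      s * Real.log K + s * L := by
    have h1 : ∑ x ∈ univ.erase x₀, -(ρ x * Real.log (ρ x)) ≤
        ∑ x ∈ univ.erase x₀, (s / (K - 1) - ρ x - ρ x * Real.log (s / (K - 1))) :=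
      Finset.sum_le_sum fun x _ => aux_neg_mul_log (ρ x) _ (hρ0 x) hc0
    have h2 : ∑ x ∈ univ.erase x₀, (s / (K - 1) - ρ x - ρ x * Real.log (s / (K - 1)))
        = ((univ.erase x₀).card : ℝ) * (s / (K - 1)) - s - s * Real.log (s / (K - 1)) := by
      rw [Finset.sum_sub_distrib, Finset.sum_sub_distrib, Finset.sum_const,
        nsmul_eq_mul, hsplit, ← Finset.sum_mul, hsplit]
    have h3 : ((univ.erase x₀).card : ℝ) * (s / (K - 1)) = s := by
      rw [hKcard]; field_simp
    have h4 : Real.log (s / (K - 1)) = Real.log s - Real.log (K - 1) :=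
      Real.log_div hs0.ne' (by linarith)
    have h5 : Real.log (K - 1) ≤ Real.log K :=
      Real.log_le_log (by linarith) (by linarith)
    calc ∑ x ∈ univ.erase x₀, -(ρ x * Real.log (ρ x))
        ≤ ((univ.erase x₀).card : ℝ) * (s / (K - 1)) - s - s * Real.log (s / (K - 1)) := by
          rw [← h2]; exact h1
      _ = s * Real.log (K - 1) - s * Real.log s := by rw [h3, h4]; ring
      _ ≤ s * Real.log K + s * L := by
          have := mul_le_mul_of_nonneg_left h5 hs0.le
          simp only [hL_def]; nlinarith
  -- main entropy inequality
  have hmain : h ≤ s * (1 + Real.log K + L) := by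
    rw [← hent, hErest]
    nlinarith [hrest, hqterm]
  -- facts about C
  have hexp1 : Real.exp 1 < 2.7182818286 := Real.exp_one_lt_d9
  have h9K : (18:ℝ) ≤ 9 * K := by linarith
  have hlog9K : 1 < Real.log (9 * K) := by
    rw [show (1:ℝ) = Real.log (Real.exp 1) by rw [Real.log_exp]]
    apply Real.log_lt_log (Real.exp_pos 1)
    linarith
  have hlogK0 : 0 < Real.log K := Real.log_pos (by linarith)
  have hlog9 : (2:ℝ) ≤ Real.log 9 := by
    have h3 : Real.exp 1 < 3 := by linarith
    have : (1:ℝ) < Real.log 3 := by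
      rw [show (1:ℝ) = Real.log (Real.exp 1) by rw [Real.log_exp]]
      exact Real.log_lt_log (Real.exp_pos 1) h3
    have h9 : Real.log 9 = 2 * Real.log 3 := by
      rw [show (9:ℝ) = 3^2 by norm_num, Real.log_pow]; push_cast; ring
    linarith
  have hCsplit : Real.log (9 * K * Real.log (9 * K)) =
      Real.log 9 + Real.log K + Real.log (Real.log (9 * K)) := by
    rw [Real.log_mul (by positivity) (by linarith), Real.log_mul (by norm_num) (by positivity)]
  have hloglog : 0 ≤ Real.log (Real.log (9 * K)) :=
    Real.log_nonneg (by linarith)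
  have hC11 : 11 + Real.log K ≤ C := by
    rw [hC_def, hCsplit]; linarith
  have hC0 : 0 < C := by linarith
  have hC9 : (9:ℝ) ≤ C := by linarith
  -- rewrite goal
  have hgoal : s * Real.log (1 / s) = s * L := by
    rw [one_div, Real.log_inv, hL_def]
  rw [hgoal]
  rw [div_le_iff₀ hC0]
  -- case split
  rcases le_or_gt (h / 6) s with hcase | hcase
  · -- s ≥ h/6 : use L ≥ log 2
    have hL2 : Real.log 2 ≤ L := by
      have : Real.log s ≤ Real.log (1/2) := Real.log_le_log hs0 hs_half
      rw [one_div, Real.log_inv] at this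
      simp only [hL_def]; linarith
    have hlog2 : (0.6931471803:ℝ) < Real.log 2 := Real.log_two_gt_d9
    have hsL : h / 6 * Real.log 2 ≤ s * L :=
      mul_le_mul hcase hL2 (by positivity) hs0.le
    have hsL0 : 0 < s * L := mul_pos hs0 (lt_of_lt_of_le (by linarith) hL2)
    calc h ≤ 9 * (h / 6 * Real.log 2) := by nlinarith [mul_lt_mul_of_pos_left hlog2 hh0]
      _ ≤ 9 * (s * L) := by linarith
      _ = s * L * 9 := by ring
      _ ≤ s * L * C := mul_le_mul_of_nonneg_left hC9 hsL0.le
  · -- s < h/6 ≤ 1/24 : L ≥ 3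
    have hs24 : s < 1/24 := by linarith
    have hL3 : (3:ℝ) ≤ L := by
      have hexp3 : Real.exp 3 < 24 := by
        have heq : Real.exp 3 = (Real.exp 1)^3 := by
          rw [← Real.exp_nat_mul]; norm_num
        have hp : (Real.exp 1)^3 < (2.7182818286:ℝ)^3 :=
          pow_lt_pow_left₀ hexp1 (Real.exp_pos 1).le (by norm_num)
        rw [heq]
        calc (Real.exp 1)^3 < (2.7182818286:ℝ)^3 := hp
          _ < 24 := by norm_num
      have h24 : (3:ℝ) < Real.log 24 := by
        rw [show (3:ℝ) = Real.log (Real.exp 3) by rw [Real.log_exp]]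
        exact Real.log_lt_log (Real.exp_pos 3) hexp3
      have : Real.log s ≤ Real.log (1/24) := Real.log_le_log hs0 (by linarith)
      rw [one_div, Real.log_inv] at this
      simp only [hL_def]; linarith
    have hkey : 1 + Real.log K + L ≤ C * L := by
      nlinarith [mul_le_mul_of_nonneg_right hC11 (by linarith : (0:ℝ) ≤ L),
        mul_le_mul_of_nonneg_left hL3 hlogK0.le]
    calc h ≤ s * (1 + Real.log K + L) := hmain
      _ ≤ s * (C * L) := mul_le_mul_of_nonneg_left hkey hs0.le
      _ = s * L * C := by ring
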